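/- arXiv:2402.07606 — 5 statements merged into one kernel-verified Lean document; each statement's English description precedes it below -/
import Mathlib

section
/- Let X = (V,E) and Y = (V',E') be digraphs and X·Y their product, a digraph on V ⊔ V'. Then the number of (V ⊔ V')-listings σ with (X·Y) Des(σ) = ∅ equals the product of the number of V-listings τ with X Des(τ) = ∅ and the number of V'-listings ρ with Y Des(ρ) = ∅. (Equivalently, the character ζ counting Hamiltonian paths of the complementary digraph is multiplicative: ζ(X·Y) = ζ(X)·ζ(Y).) -/
/-- The 1-based `X`-descent set of a listing `l = (σ_1, …, σ_n)`:
the set of `i ∈ [n-1]` with `(σ_i, σ_{i+1}) ∈ E`. -/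
def XDes {V : Type*} (E : V → V → Prop) (l : List V) : Set ℕ :=
  {i : ℕ | ∃ (h1 : 1 ≤ i) (h2 : i ≤ l.length - 1),
    E (l.get ⟨i - 1, by omega⟩) (l.get ⟨i, by omega⟩)}

/-- Edge relation of the product digraph `X · Y` on the disjoint union `V ⊔ V'`:
edges of `X`, edges of `Y`, and all pairs from `V` to `V'`. -/
def prodEdge {V V' : Type*} (E : V → V → Prop) (E' : V' → V' → Prop) :
    V ⊕ V' → V ⊕ V' → Prop
  | Sum.inl u, Sum.inl v => E u v
  | Sum.inr u, Sum.inr v => E' u v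
  | Sum.inl _, Sum.inr _ => True
  | Sum.inr _, Sum.inl _ => False

lemma filterMap_getRight?_map_inr {V V' : Type*} (l : List V') :
    ((l.map Sum.inr).filterMap (Sum.getRight? (α := V))) = l := by
  induction l with
  | nil => simp
  | cons a t ih => simp [ih]

lemma filterMap_getRight?_map_inl {V V' : Type*} (l : List V) :
    ((l.map Sum.inl).filterMap (Sum.getRight? (α := V) (β := V'))) = [] := by
  induction l with
  | nil => simp
  | cons a t ih => simp [ih]

lemma filterMap_getLeft?_map_inl {V V' : Type*} (l : List V) :
    ((l.map Sum.inl).filterMap (Sum.getLeft? (β := V'))) = l := by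
  induction l with
  | nil => simp
  | cons a t ih => simp [ih]

lemma filterMap_getLeft?_map_inr {V V' : Type*} (l : List V') :
    ((l.map Sum.inr).filterMap (Sum.getLeft? (α := V) (β := V'))) = [] := by
  induction l with
  | nil => simp
  | cons a t ih => simp [ih]

lemma xdes_empty_iff {V : Type*} (E : V → V → Prop) (l : List V) :
    XDes E l = ∅ ↔ l.Chain' (fun a b => ¬ E a b) := by
  rw [List.Chain', List.isChain_iff_getElem]
  constructor
  · intro h i hi hEd
    have : (i+1) ∈ XDes E l :=
      ⟨by omega, by omega, by simpa using hEd⟩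
    simp [h] at this
  · intro h
    ext i
    simp only [XDes, Set.mem_setOf_eq, Set.mem_empty_iff_false, iff_false]
    rintro ⟨h1, h2, hEd⟩
    refine h (i-1) (by omega) ?_
    have hi : i - 1 + 1 = i := by omega
    simp only [hi]
    exact hEd

lemma all_left_of_head {V V' : Type*} (a : V) (l : List (V ⊕ V'))
    (h : List.Chain' (fun x y => ¬ (Sum.isLeft x ∧ Sum.isRight y)) (Sum.inl a :: l)) :
    ∀ x ∈ l, Sum.isLeft x := by
  induction l generalizing a with
  | nil => simp
  | cons b t ih =>
    have hab := (List.isChain_cons_cons.mp h).1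
    have hb : Sum.isLeft b := by
      cases b with
      | inl b => simp
      | inr b => simp at hab
    obtain ⟨b', rfl⟩ := Sum.isLeft_iff.mp hb
    intro x hx
    rcases List.mem_cons.mp hx with rfl | hx
    · simp
    · exact ih b' (List.isChain_cons_cons.mp h).2 x hx

lemma eq_map_inl_of_all_left {V V' : Type*} (l : List (V ⊕ V'))
    (h : ∀ x ∈ l, Sum.isLeft x) :
    l = (l.filterMap Sum.getLeft?).map Sum.inl := by
  induction l with
  | nil => simp
  | cons b s ih =>
    obtain ⟨b', rfl⟩ := Sum.isLeft_iff.mp (h b (by simp))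
    have := ih (fun x hx => h x (by simp [hx]))
    simp only [List.filterMap_cons, Sum.getLeft?_inl, List.map_cons]
    exact congrArg _ this

lemma decompose {V V' : Type*} (l : List (V ⊕ V'))
    (h : List.Chain' (fun x y => ¬ (Sum.isLeft x ∧ Sum.isRight y)) l) :
    ∃ (ρ : List V') (τ : List V), l = ρ.map Sum.inr ++ τ.map Sum.inl := by
  induction l with
  | nil => exact ⟨[], [], rfl⟩
  | cons a t ih =>
    cases a with
    | inr a =>
      obtain ⟨ρ, τ, rfl⟩ := ih h.tail
      exact ⟨a :: ρ, τ, rfl⟩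
    | inl a =>
      have hall : ∀ x ∈ Sum.inl a :: t, Sum.isLeft x := by
        intro x hx
        rcases List.mem_cons.mp hx with rfl | hx
        · simp
        · exact all_left_of_head a t h x hx
      refine ⟨[], (Sum.inl a :: t).filterMap Sum.getLeft?, ?_⟩
      simpa using eq_map_inl_of_all_left _ hall

/-- The number of `(V ⊔ V')`-listings with empty `(X·Y)`-descent set equals the product
of the numbers of `V`-listings with empty `X`-descent set and `V'`-listings with empty
`Y`-descent set: the character counting Hamiltonian paths of the complementary digraph
is multiplicative. -/
theorem character_multiplicative {V V' : Type*} [Fintype V] [Fintype V']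
    (E : V → V → Prop) (E' : V' → V' → Prop)
    (hE : ∀ v, ¬ E v v) (hE' : ∀ v, ¬ E' v v) :
    Nat.card {l : List (V ⊕ V') // l.Nodup ∧ (∀ x, x ∈ l) ∧
        XDes (prodEdge E E') l = ∅} =
      Nat.card {l : List V // l.Nodup ∧ (∀ x, x ∈ l) ∧ XDes E l = ∅} *
      Nat.card {l : List V' // l.Nodup ∧ (∀ x, x ∈ l) ∧ XDes E' l = ∅} := by
  rw [← Nat.card_prod]
  refine (Nat.card_eq_of_bijective
    (f := fun p : ({l : List V // l.Nodup ∧ (∀ x, x ∈ l) ∧ XDes E l = ∅} ×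
        {l : List V' // l.Nodup ∧ (∀ x, x ∈ l) ∧ XDes E' l = ∅}) =>
      (⟨p.2.1.map Sum.inr ++ p.1.1.map Sum.inl, ?_, ?_, ?_⟩ :
        {l : List (V ⊕ V') // l.Nodup ∧ (∀ x, x ∈ l) ∧ XDes (prodEdge E E') l = ∅}))
    ⟨?_, ?_⟩).symm
  · -- Nodup
    obtain ⟨⟨τ, hτn, hτm, hτd⟩, ⟨ρ, hρn, hρm, hρd⟩⟩ := p
    rw [List.nodup_append]
    refine ⟨hρn.map Sum.inr_injective, hτn.map Sum.inl_injective, ?_⟩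
    intro x hx y hx'
    simp only [List.mem_map] at hx hx'
    obtain ⟨a, _, rfl⟩ := hx
    obtain ⟨b, _, rfl⟩ := hx'
    simp
  · -- mem
    obtain ⟨⟨τ, hτn, hτm, hτd⟩, ⟨ρ, hρn, hρm, hρd⟩⟩ := p
    intro x
    cases x with
    | inl x => simp [hτm x]
    | inr x => simp [hρm x]
  · -- descents
    obtain ⟨⟨τ, hτn, hτm, hτd⟩, ⟨ρ, hρn, hρm, hρd⟩⟩ := p
    rw [xdes_empty_iff] at *
    rw [List.Chain', List.isChain_append]
    refine ⟨?_, ?_, ?_⟩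
    · rw [List.isChain_map]
      exact hρd.imp fun {a b} h => by simpa [prodEdge] using h
    · rw [List.isChain_map]
      exact hτd.imp fun {a b} h => by simpa [prodEdge] using h
    · intro x hx y hy
      have hx' : x ∈ List.map Sum.inr ρ := List.mem_of_mem_getLast? hx
      have hy' : y ∈ List.map Sum.inl τ := List.mem_of_mem_head? hy
      simp only [List.mem_map] at hx' hy'
      obtain ⟨a, _, rfl⟩ := hx'
      obtain ⟨b, _, rfl⟩ := hy'
      simp [prodEdge]
  · -- injective
    rintro ⟨⟨τ, hτ⟩, ⟨ρ, hρ⟩⟩ ⟨⟨τ', hτ'⟩, ⟨ρ', hρ'⟩⟩ h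
    simp only [Subtype.mk_eq_mk] at h
    have hρρ : ρ = ρ' := by
      have := congrArg (List.filterMap Sum.getRight?) h
      rwa [List.filterMap_append, List.filterMap_append,
        filterMap_getRight?_map_inr, filterMap_getRight?_map_inr,
        filterMap_getRight?_map_inl, filterMap_getRight?_map_inl,
        List.append_nil, List.append_nil] at this
    have hττ : τ = τ' := by
      have := congrArg (List.filterMap Sum.getLeft?) h
      rwa [List.filterMap_append, List.filterMap_append,
        filterMap_getLeft?_map_inr, filterMap_getLeft?_map_inr,
        filterMap_getLeft?_map_inl, filterMap_getLeft?_map_inl,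
        List.nil_append, List.nil_append] at this
    simp [hρρ, hττ]
  · -- surjective
    rintro ⟨l, hn, hm, hd⟩
    rw [xdes_empty_iff] at hd
    have hd' : List.Chain' (fun x y => ¬ (Sum.isLeft x ∧ Sum.isRight y)) l := by
      refine hd.imp fun {a b} h => ?_
      rintro ⟨ha, hb⟩
      obtain ⟨a', rfl⟩ := Sum.isLeft_iff.mp ha
      obtain ⟨b', rfl⟩ := Sum.isRight_iff.mp hb
      exact h trivial
    obtain ⟨ρ, τ, rfl⟩ := decompose l hd'
    rw [List.nodup_append] at hn
    rw [List.Chain', List.isChain_append] at hd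
    refine ⟨⟨⟨τ, hn.2.1.of_map, ?_, ?_⟩, ⟨ρ, hn.1.of_map, ?_, ?_⟩⟩, rfl⟩
    · intro x
      have := hm (Sum.inl x)
      simp only [List.mem_append, List.mem_map] at this
      rcases this with ⟨a, _, ha⟩ | ⟨a, ha, ha'⟩
      · exact absurd ha (by simp)
      · rwa [← Sum.inl_injective ha']
    · rw [xdes_empty_iff]
      have := hd.2.1
      rw [List.isChain_map] at this
      exact this.imp fun {a b} h => by simpa [prodEdge] using h
    · intro x
      have := hm (Sum.inr x)
      simp only [List.mem_append, List.mem_map] at this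
      rcases this with ⟨a, ha, ha'⟩ | ⟨a, _, ha⟩
      · rwa [← Sum.inr_injective ha']
      · exact absurd ha (by simp)
    · rw [xdes_empty_iff]
      have := hd.1
      rw [List.isChain_map] at this
      exact this.imp fun {a b} h => by simpa [prodEdge] using h
end

section
/- Let X be a digraph on a vertex set V, let F = (V_1,…,V_k) be a composition of V, and let f_F : V → {1,…,k} be the coloring with f_F(v) = j for v ∈ V_j. Then the number of (f_F,X)-friendly V-listings equals the product over i = 1,…,k of the number of V_i-listings τ with (X restricted to V_i) Des(τ) = ∅. -/
/-- A listing `l = (σ_1, …, σ_n)` is `(f,X)`-friendly if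
`f(σ_1) ≤ f(σ_2) ≤ ⋯ ≤ f(σ_n)` and `f(σ_j) < f(σ_{j+1})` for each `j ∈ [n-1]`
with `(σ_j, σ_{j+1})` an edge of `X`. -/
def Friendly {V : Type*} (E : V → V → Prop) (f : V → ℕ) (l : List V) : Prop :=
  l.Chain' (fun u v => f u ≤ f v) ∧
  ∀ i : ℕ, ∀ (h1 : 1 ≤ i) (h2 : i ≤ l.length - 1),
    E (l.get ⟨i - 1, by omega⟩) (l.get ⟨i, by omega⟩) →
      f (l.get ⟨i - 1, by omega⟩) < f (l.get ⟨i, by omega⟩)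

/-- Edge relation of the restriction of the digraph to a subset `S`. -/
def restrictEdge {V : Type*} (E : V → V → Prop) (S : Finset V) (u v : V) : Prop :=
  u ∈ S ∧ v ∈ S ∧ E u v

section Helpers
variable {V : Type*}

theorem chain'_iff_get_aux {α : Type*} {R : α → α → Prop} {l : List α} :
    l.Chain' R ↔ ∀ (i : ℕ) (h : i < l.length - 1),
      R (l.get ⟨i, by omega⟩) (l.get ⟨i + 1, by omega⟩) := by
  unfold List.Chain'
  rw [List.isChain_iff_getElem]
  exact ⟨fun h i hi => h i (by omega), fun h i hi => h i (by omega)⟩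

theorem isChain_iff_get_aux {α : Type*} {R : α → α → Prop} {l : List α} :
    l.IsChain R ↔ ∀ (i : ℕ) (h : i < l.length - 1),
      R (l.get ⟨i, by omega⟩) (l.get ⟨i + 1, by omega⟩) :=
  chain'_iff_get_aux

theorem xdes_empty_iff_s7 (R : V → V → Prop) (t : List V) :
    XDes R t = ∅ ↔ t.Chain' (fun u v => ¬ R u v) := by
  rw [chain'_iff_get_aux, Set.eq_empty_iff_forall_notMem]
  constructor
  · intro h i hi hR
    exact h (i + 1) ⟨by omega, by omega, hR⟩
  · rintro h i ⟨h1, h2, hR⟩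
    refine h (i - 1) (by omega) ?_
    have he : (⟨i - 1 + 1, by omega⟩ : Fin t.length) = ⟨i, by omega⟩ := by
      apply Fin.ext; simp; omega
    rw [he]
    exact hR

theorem friendly_iff (E : V → V → Prop) (f : V → ℕ) (l : List V) :
    Friendly E f l ↔ l.Chain' (fun u v => f u ≤ f v) ∧
      l.Chain' (fun u v => E u v → f u < f v) := by
  unfold Friendly
  refine and_congr_right fun _ => ?_
  rw [chain'_iff_get_aux]
  constructor
  · intro h i hi hEe
    exact h (i + 1) (by omega) (by omega) hEe
  · intro h i h1 h2 hEe
    have he : (⟨i - 1 + 1, by omega⟩ : Fin l.length) = ⟨i, by omega⟩ := by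
      apply Fin.ext; simp; omega
    have := h (i - 1) (by omega)
    rw [he] at this
    exact this hEe

theorem filter_split (f : V → ℕ) : ∀ (l : List V) (a : ℕ),
    l.Pairwise (fun u v => f u ≤ f v) → (∀ v ∈ l, a ≤ f v) →
      l.filter (fun v => f v = a) ++ l.filter (fun v => a < f v) = l := by
  intro l
  induction l with
  | nil => intro a _ _; rfl
  | cons x t ih =>
    intro a hp hb
    rcases List.pairwise_cons.mp hp with ⟨hx, ht⟩
    by_cases hxa : f x = a
    · rw [List.filter_cons_of_pos (by simp [hxa]), List.filter_cons_of_neg (by simp [hxa]),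
        List.cons_append, ih a ht (fun v hv => hb v (List.mem_cons_of_mem _ hv))]
    · have hxgt : a < f x := lt_of_le_of_ne (hb x (List.mem_cons_self)) (Ne.symm hxa)
      have h1 : (x :: t).filter (fun v => decide (f v = a)) = [] := by
        rw [List.filter_eq_nil_iff]
        intro v hv
        rcases List.mem_cons.mp hv with rfl | hv
        · simpa using hxa
        · have := hx v hv; simp only [decide_eq_true_eq]; omega
      have h2 : (x :: t).filter (fun v => decide (a < f v)) = x :: t := by
        rw [List.filter_eq_self]
        intro v hv
        rcases List.mem_cons.mp hv with rfl | hv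
        · simpa using hxgt
        · have := hx v hv; simp only [decide_eq_true_eq]; omega
      rw [h1, h2]; rfl

theorem flatMap_filter_sorted (f : V → ℕ) : ∀ (b a : ℕ) (l : List V),
    l.Pairwise (fun u v => f u ≤ f v) → (∀ v ∈ l, a ≤ f v ∧ f v < a + b) →
    ((List.range' a b).flatMap (fun i => l.filter (fun v => f v = i))) = l := by
  intro b
  induction b with
  | zero =>
    intro a l _ hb
    have : l = [] := by
      cases l with
      | nil => rfl
      | cons x t => exact absurd (hb x (List.mem_cons_self)) (by omega)
    simp [this]
  | succ b ih =>
    intro a l hp hb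
    rw [List.range'_succ, List.flatMap_cons]
    set l' := l.filter (fun v => a < f v) with hl'
    have hstep : ∀ i ∈ List.range' (a+1) b,
        l.filter (fun v => f v = i) = l'.filter (fun v => f v = i) := by
      intro i hi
      have hai : a < i := by
        have := List.mem_range'_1.mp hi; omega
      rw [hl', List.filter_filter]
      apply List.filter_congr
      intro v hv
      by_cases h : f v = i
      · have : a < f v := by omega
        simp [h, this]; omega
      · simp [h]
    have hrec : (List.range' (a+1) b).flatMap (fun i => l.filter (fun v => f v = i)) = l' := by
      rw [List.flatMap_def, List.map_congr_left hstep, ← List.flatMap_def]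
      apply ih
      · exact List.Pairwise.sublist (List.filter_sublist) hp
      · intro v hv
        rcases List.mem_filter.mp hv with ⟨hvl, hva⟩
        have := (hb v hvl)
        simp only [decide_eq_true_eq] at hva
        omega
    rw [hrec]
    exact filter_split f l a hp (fun v hv => (hb v hv).1)

theorem flatten_ofFn_filter (f : V → ℕ) (k : ℕ) (l : List V)
    (hp : l.Pairwise (fun u v => f u ≤ f v))
    (hb : ∀ v ∈ l, 1 ≤ f v ∧ f v ≤ k) :
    (List.ofFn (fun i : Fin k => l.filter (fun v => f v = (i : ℕ) + 1))).flatten = l := by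
  rw [List.ofFn_eq_map, ← List.flatMap_def]
  have h1 : List.range' 1 k = (List.finRange k).map (fun i : Fin k => (i : ℕ) + 1) := by
    rw [List.range'_eq_map_range, ← List.map_coe_finRange_eq_range, List.map_map]
    apply List.map_congr_left
    intro i _
    simp [Nat.add_comm]
  have h2 : (List.finRange k).flatMap (fun i : Fin k => l.filter (fun v => f v = (i : ℕ) + 1))
      = (List.range' 1 k).flatMap (fun n => l.filter (fun v => f v = n)) := by
    rw [h1, List.flatMap_map]
  rw [h2]
  exact flatMap_filter_sorted f k 1 l hp (fun v hv => by have := hb v hv; omega)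

theorem flatMap_single {ι : Type*} (h : ι → List V) :
    ∀ (L : List ι) (i : ι), L.Nodup → i ∈ L → (∀ j ∈ L, j ≠ i → h j = []) →
      L.flatMap h = h i := by
  intro L
  induction L with
  | nil => intro i _ hi; exact absurd hi List.not_mem_nil
  | cons a t ih =>
    intro i hnd hi hz
    rw [List.flatMap_cons]
    rcases List.mem_cons.mp hi with rfl | hit
    · have : t.flatMap h = [] := by
        rw [List.flatMap_eq_nil_iff]
        intro j hj
        exact hz j (List.mem_cons_of_mem _ hj)
          (fun hji => (List.nodup_cons.mp hnd).1 (hji ▸ hj))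
      rw [this, List.append_nil]
    · have : h a = [] := hz a (List.mem_cons_self)
        (fun hai => (List.nodup_cons.mp hnd).1 (hai ▸ hit))
      rw [this, List.nil_append]
      exact ih i (List.nodup_cons.mp hnd).2 hit
        (fun j hj => hz j (List.mem_cons_of_mem _ hj))

end Helpers

/-- Let `F = (V_1, …, V_k)` be a composition of `V` and `f_F` the coloring with value
`j` on `V_j`. The number of `(f_F,X)`-friendly `V`-listings equals the product over
`i = 1, …, k` of the numbers of `V_i`-listings with empty descent set in the
restriction `X|_{V_i}`. -/
theorem card_friendly_eq_prod {V : Type*} [Fintype V] [DecidableEq V]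
    (E : V → V → Prop) (hE : ∀ v, ¬ E v v)
    {k : ℕ} (F : Fin k → Finset V)
    (hdisj : ∀ i j, i ≠ j → Disjoint (F i) (F j))
    (hne : ∀ i, (F i).Nonempty)
    (hcover : ∀ v, ∃ i, v ∈ F i)
    (f : V → ℕ) (hf : ∀ (i : Fin k), ∀ v ∈ F i, f v = (i : ℕ) + 1) :
    Nat.card {l : List V // l.Nodup ∧ (∀ v, v ∈ l) ∧ Friendly E f l} =
      ∏ i : Fin k, Nat.card {t : List V // t.Nodup ∧ (∀ v, v ∈ t ↔ v ∈ F i) ∧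
        XDes (restrictEdge E (F i)) t = ∅} := by
  classical
  have hmem : ∀ (v : V) (i : Fin k), v ∈ F i ↔ f v = (i : ℕ) + 1 := by
    intro v i
    refine ⟨hf i v, fun hv => ?_⟩
    obtain ⟨j, hj⟩ := hcover v
    have hj' := hf j v hj
    have : j = i := Fin.ext (by omega)
    exact this ▸ hj
  have hbnd : ∀ v : V, 1 ≤ f v ∧ f v ≤ k := by
    intro v
    obtain ⟨j, hj⟩ := hcover v
    have h1 := hf j v hj
    have h2 := j.isLt
    omega
  haveI htrans : IsTrans V (fun u v => f u ≤ f v) := ⟨fun _ _ _ => le_trans⟩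
  have hfilter_eq : ∀ (l : List V) (i : Fin k),
      l.filter (fun v => decide (v ∈ F i)) = l.filter (fun v => decide (f v = (i : ℕ) + 1)) := by
    intro l i
    exact List.filter_congr fun v _ => decide_eq_decide.mpr (hmem v i)
  have hforward : ∀ l : List V, l.Nodup → (∀ v, v ∈ l) → Friendly E f l → ∀ i : Fin k,
      (l.filter (fun v => decide (v ∈ F i))).Nodup ∧
      (∀ v, v ∈ l.filter (fun v => decide (v ∈ F i)) ↔ v ∈ F i) ∧
      XDes (restrictEdge E (F i)) (l.filter (fun v => decide (v ∈ F i))) = ∅ := by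
    intro l hnd hcompl hfr i
    obtain ⟨hch1, hch2⟩ := (friendly_iff E f l).mp hfr
    refine ⟨hnd.filter _, ?_, ?_⟩
    · intro v; simp [List.mem_filter, hcompl v]
    · rw [xdes_empty_iff_s7]
      have hpar : l.Pairwise (fun u v => f u ≤ f v) := List.isChain_iff_pairwise.mp hch1
      have hjoin := flatten_ofFn_filter f k l hpar (fun v _ => hbnd v)
      have hinf : l.filter (fun v => decide (v ∈ F i)) <:+: l := by
        rw [hfilter_eq]
        nth_rewrite 2 [← hjoin]
        exact List.infix_of_mem_flatten (List.mem_ofFn.mpr ⟨i, rfl⟩)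
      have hchf : (l.filter (fun v => decide (v ∈ F i))).Chain'
          (fun u v => E u v → f u < f v) := hch2.infix hinf
      rw [chain'_iff_get_aux] at hchf ⊢
      intro j hj
      rintro ⟨hu, hv, hEuv⟩
      have h1 := hchf j hj hEuv
      have hx := (hmem _ i).mp hu
      have hy := (hmem _ i).mp hv
      omega
  have hback : ∀ p : Fin k → List V,
      (∀ i, (p i).Nodup) → (∀ i v, v ∈ p i ↔ v ∈ F i) →
      (∀ i, (p i).Chain' (fun u v => ¬ restrictEdge E (F i) u v)) →
      ((List.ofFn p).flatten.Nodup ∧ (∀ v, v ∈ (List.ofFn p).flatten) ∧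
        Friendly E f (List.ofFn p).flatten) := by
    intro p hnd hpmem hpch
    have hfp : ∀ i, ∀ v ∈ p i, f v = (i : ℕ) + 1 :=
      fun i v hv => (hmem v i).mp ((hpmem i v).mp hv)
    have hLne : [] ∉ List.ofFn p := by
      rw [List.mem_ofFn]
      rintro ⟨i, hi⟩
      obtain ⟨v, hv⟩ := hne i
      have : v ∈ p i := (hpmem i v).mpr hv
      rw [hi] at this
      exact List.not_mem_nil this
    refine ⟨?_, ?_, ?_⟩
    · rw [List.nodup_flatten]
      constructor
      · intro t ht
        obtain ⟨i, rfl⟩ := List.mem_ofFn.mp ht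
        exact hnd i
      · rw [List.pairwise_ofFn]
        intro i j hij a ha hb
        exact Finset.disjoint_left.mp (hdisj i j (ne_of_lt hij))
          ((hpmem i a).mp ha) ((hpmem j a).mp hb)
    · intro v
      rw [List.mem_flatten]
      obtain ⟨i, hi⟩ := hcover v
      exact ⟨p i, List.mem_ofFn.mpr ⟨i, rfl⟩, (hpmem i v).mpr hi⟩
    · rw [friendly_iff]
      have hbound : ∀ (R : V → V → Prop), (∀ u v, f u < f v → R u v) →
          (List.ofFn p).Chain' (fun l₁ l₂ => ∀ x ∈ l₁.getLast?, ∀ y ∈ l₂.head?, R x y) := by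
        intro R hR
        rw [chain'_iff_get_aux]
        intro m hm
        intro x hx y hy
        rw [List.get_ofFn] at hx hy
        have hxv := hfp _ _ (List.mem_of_mem_getLast? hx)
        have hyv := hfp _ _ (List.mem_of_mem_head? hy)
        apply hR
        simp only [Fin.coe_cast] at hxv hyv
        have hm' : m < k - 1 := by
          have := List.length_ofFn (f := p)
          omega
        omega
      constructor
      · refine (List.isChain_flatten hLne).mpr ?_
        constructor
        · intro t ht
          obtain ⟨i, rfl⟩ := List.mem_ofFn.mp ht
          rw [isChain_iff_get_aux]
          intro j hj
          rw [hfp i _ (List.get_mem _ _), hfp i _ (List.get_mem _ _)]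
        · exact hbound _ (fun u v h => le_of_lt h)
      · refine (List.isChain_flatten hLne).mpr ?_
        refine ⟨?_, hbound _ (fun u v h _ => h)⟩
        intro t ht
        obtain ⟨i, rfl⟩ := List.mem_ofFn.mp ht
        have hch := hpch i
        rw [chain'_iff_get_aux] at hch; rw [isChain_iff_get_aux]
        intro j hj hEuv
        exact absurd ⟨(hpmem i _).mp (List.get_mem _ _),
          (hpmem i _).mp (List.get_mem _ _), hEuv⟩ (hch j hj)
  rw [← Nat.card_pi]
  apply Nat.card_congr
  refine
    { toFun := fun l i => ⟨l.1.filter (fun v => decide (v ∈ F i)),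
        hforward l.1 l.2.1 l.2.2.1 l.2.2.2 i⟩
      invFun := fun T => ⟨(List.ofFn fun i => (T i).1).flatten,
        hback (fun i => (T i).1) (fun i => (T i).2.1) (fun i v => (T i).2.2.1 v)
          (fun i => (xdes_empty_iff_s7 _ _).mp (T i).2.2.2)⟩
      left_inv := ?_
      right_inv := ?_ }
  · rintro ⟨l, hnd, hcompl, hfr⟩
    apply Subtype.ext
    simp only
    have hpar : l.Pairwise (fun u v => f u ≤ f v) :=
      List.isChain_iff_pairwise.mp ((friendly_iff E f l).mp hfr).1
    have : (fun i : Fin k => l.filter fun v => decide (v ∈ F i)) =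
        (fun i : Fin k => l.filter fun v => decide (f v = (i : ℕ) + 1)) :=
      funext fun i => hfilter_eq l i
    rw [this]
    exact flatten_ofFn_filter f k l hpar (fun v _ => hbnd v)
  · intro T
    funext i
    apply Subtype.ext
    simp only
    have hpmem : ∀ (j : Fin k) v, v ∈ (T j).1 ↔ v ∈ F j := fun j => (T j).2.2.1
    have hpf : ∀ j : Fin k, ((T j).1).filter (fun v => decide (v ∈ F i)) =
        if j = i then (T i).1 else [] := by
      intro j
      by_cases h : j = i
      · subst h
        rw [if_pos rfl, List.filter_eq_self]
        intro v hv
        simpa using (hpmem j v).mp hv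
      · rw [if_neg h, List.filter_eq_nil_iff]
        intro v hv
        have h1 := (hpmem j v).mp hv
        simp only [decide_eq_true_eq]
        exact fun h2 => Finset.disjoint_left.mp (hdisj j i h) h1 h2
    rw [List.filter_flatten, List.map_ofFn]
    have heq : ((fun t => List.filter (fun v => decide (v ∈ F i)) t) ∘ (fun j => (T j).1)) =
        fun j : Fin k => if j = i then (T i).1 else [] := funext fun j => hpf j
    rw [heq, List.ofFn_eq_map, ← List.flatMap_def,
      flatMap_single _ _ i (List.nodup_finRange k) (List.mem_finRange i) (fun j _ hj => if_neg hj)]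
    simp
end

section
/- Let X be a digraph on a vertex set V with |V| = n and let I ⊆ [n−1]. Then the number of V-listings σ with X Des(σ) = I equals the number of V-listings σ with X^op Des(σ) = I^op, where I^op = {n − i : i ∈ I}. (This yields U_{X^op} = U_X for the Redei-Berge symmetric function.) -/
lemma xdes_reverse {V : Type*} (E : V → V → Prop) (l : List V) :
    XDes (fun u v => E v u) l.reverse = (fun i => l.length - i) '' XDes E l := by
  ext i
  simp only [XDes, Set.mem_setOf_eq, Set.mem_image, List.length_reverse,
    List.get_eq_getElem]
  constructor
  · rintro ⟨h1, h2, hE⟩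
    refine ⟨l.length - i, ⟨by omega, by omega, ?_⟩, by omega⟩
    rw [List.getElem_reverse, List.getElem_reverse] at hE
    convert hE using 2 <;> omega
  · rintro ⟨j, ⟨h1, h2, hE⟩, rfl⟩
    refine ⟨by omega, by omega, ?_⟩
    rw [List.getElem_reverse, List.getElem_reverse]
    convert hE using 2 <;> omega

lemma img_img {n : ℕ} {I : Set ℕ} (hI : I ⊆ Set.Icc 1 (n - 1)) :
    (fun i => n - i) '' ((fun i => n - i) '' I) = I := by
  ext j
  simp only [Set.mem_image]
  constructor
  · rintro ⟨i, ⟨k, hk, rfl⟩, rfl⟩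
    obtain ⟨hk1, hk2⟩ := hI hk
    have h : n - (n - k) = k := by omega
    rwa [h]
  · intro hj
    obtain ⟨h1, h2⟩ := hI hj
    exact ⟨n - j, ⟨j, hj, rfl⟩, by omega⟩

/-- For a digraph `X` on `V` with `|V| = n` and `I ⊆ [n-1]`, the number of `V`-listings
`σ` with `X Des(σ) = I` equals the number of `V`-listings `σ` with
`X^op Des(σ) = I^op`, where `I^op = {n - i : i ∈ I}`. -/
theorem card_descents_opp {V : Type*} [Fintype V]
    (E : V → V → Prop) (hE : ∀ v, ¬ E v v)
    (I : Set ℕ) (hI : I ⊆ Set.Icc 1 (Fintype.card V - 1)) :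
    Nat.card {l : List V // l.Nodup ∧ (∀ v, v ∈ l) ∧ XDes E l = I} =
      Nat.card {l : List V // l.Nodup ∧ (∀ v, v ∈ l) ∧
        XDes (fun u v => E v u) l = (fun i => Fintype.card V - i) '' I} := by
  classical
  have hlen : ∀ l : List V, l.Nodup → (∀ v, v ∈ l) → l.length = Fintype.card V := by
    intro l hnd hmem
    rw [← List.toFinset_card_of_nodup hnd]
    congr 1
    apply Finset.eq_univ_iff_forall.mpr
    intro v
    simpa using hmem v
  apply Nat.card_congr
  refine ⟨fun x => ⟨x.1.reverse, ?_⟩, fun x => ⟨x.1.reverse, ?_⟩, ?_, ?_⟩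
  · obtain ⟨l, hnd, hmem, hdes⟩ := x
    dsimp only
    refine ⟨List.nodup_reverse.mpr hnd, fun v => by simpa using hmem v, ?_⟩
    rw [xdes_reverse, hdes, hlen l hnd hmem]
  · obtain ⟨l, hnd, hmem, hdes⟩ := x
    dsimp only
    refine ⟨List.nodup_reverse.mpr hnd, fun v => by simpa using hmem v, ?_⟩
    have h := xdes_reverse (fun u v => E v u) l
    rw [h, hdes, hlen l hnd hmem, img_img hI]
  · intro x; apply Subtype.ext; simp
  · intro x; apply Subtype.ext; simp
end

section
/- Let X be a digraph on a vertex set V. Then the number of Hamiltonian paths of X and the number of Hamiltonian paths of the complement of X have the same parity, i.e., #{V-listings σ : X Des(σ) = [n−1]} ≡ #{V-listings σ : (complement of X) Des(σ) = [n−1]} (mod 2), where n = |V|. -/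
/-- Edge relation of the complement digraph: pairs `(u,v)` with `u ≠ v` not in `E`. -/
def complEdge {V : Type*} (E : V → V → Prop) (u v : V) : Prop :=
  u ≠ v ∧ ¬ E u v

/-! ### Auxiliary material for the proof -/

section Aux

variable {V : Type*}

/-- Parity helper: a finset closed under a fixed-point-free involution has even card. -/
lemma even_card_aux {S : Type*} [DecidableEq S] (f : S → S) (hf : ∀ x, f (f x) = x) :
    ∀ s : Finset S, (∀ x ∈ s, f x ∈ s) → (∀ x ∈ s, f x ≠ x) → Even s.card := by
  intro s
  induction s using Finset.strongInduction with
  | _ s ih =>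
    intro hmap hne
    rcases s.eq_empty_or_nonempty with rfl | ⟨x, hx⟩
    · simp
    · have hfx : f x ∈ s := hmap x hx
      have hxx : f x ≠ x := hne x hx
      set t := (s.erase x).erase (f x) with ht
      have hmem : ∀ y, y ∈ t ↔ y ≠ f x ∧ y ≠ x ∧ y ∈ s := by
        intro y; simp only [ht, Finset.mem_erase]
      have hsub : t ⊂ s :=
        Finset.ssubset_of_subset_of_ssubset
          (Finset.erase_subset _ _) (Finset.erase_ssubset hx)
      have hcard2 : 2 ≤ s.card := Finset.one_lt_card.mpr ⟨f x, hfx, x, hx, hxx⟩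
      have hcard : t.card = s.card - 2 := by
        have h1 : f x ∈ s.erase x := Finset.mem_erase.mpr ⟨hxx, hfx⟩
        rw [ht, Finset.card_erase_of_mem h1, Finset.card_erase_of_mem hx]
        omega
      have heven : Even t.card := by
        refine ih t hsub (fun y hy => ?_) (fun y hy => ?_)
        · rw [hmem] at hy ⊢
          refine ⟨fun h => hy.2.1 ?_, fun h => hy.1 ?_, hmap y hy.2.2⟩
          · rw [← hf y, h, hf x]
          · rw [← hf y, h]
        · exact hne y ((hmem y).mp hy).2.2
      obtain ⟨k, hk⟩ := heven
      exact ⟨k + 1, by omega⟩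

/-- An involution on a finite type: the cardinality is congruent mod 2 to the
number of fixed points. -/
lemma parity_invol {S : Type*} [Finite S] (f : S → S) (hf : ∀ x, f (f x) = x) :
    Nat.card S ≡ Nat.card {x : S // f x = x} [MOD 2] := by
  classical
  cases nonempty_fintype S
  rw [Nat.card_eq_fintype_card, Nat.card_eq_fintype_card, Fintype.card_subtype]
  have hsplit := Finset.card_filter_add_card_filter_not
    (s := (Finset.univ : Finset S)) (p := fun x => f x = x)
  have heven : Even ((Finset.univ.filter (fun x => ¬ f x = x)).card) := by
    refine even_card_aux f hf _ (fun x hx => ?_) (fun x hx => ?_)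
    · simp only [Finset.mem_filter, Finset.mem_univ, true_and] at hx ⊢
      intro h
      exact hx (by rw [← hf x, h, h])
    · simpa using (Finset.mem_filter.mp hx).2
  obtain ⟨k, hk⟩ := heven
  simp only [Finset.card_univ] at hsplit
  unfold Nat.ModEq
  omega

/-- A weak cover: list of nonempty `E`-paths with no repeated vertices. -/
def IsWCover (E : V → V → Prop) (L : List (List V)) : Prop :=
  (∀ p ∈ L, p ≠ [] ∧ p.Chain' E) ∧ L.flatten.Nodup

/-- A cover: weak cover using every vertex. -/
def IsCover (E : V → V → Prop) (L : List (List V)) : Prop :=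
  IsWCover E L ∧ ∀ x, x ∈ L.flatten

lemma length_le_flatten_length (L : List (List V)) (h : ∀ p ∈ L, p ≠ []) :
    L.length ≤ L.flatten.length := by
  induction L with
  | nil => simp
  | cons p rest ih =>
    simp only [List.flatten_cons, List.length_append, List.length_cons]
    have h1 : 1 ≤ p.length := List.length_pos_iff.mpr (h p (by simp))
    have h2 := ih (fun q hq => h q (by simp [hq]))
    omega

lemma isCover_finite [Fintype V] (E : V → V → Prop) :
    {L : List (List V) | IsCover E L}.Finite := by
  classical
  set n := Fintype.card V with hn
  have h1 : {p : List V | p.length ≤ n}.Finite := List.finite_length_le V n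
  haveI := h1.to_subtype
  have h2 : {M : List ↥{p : List V | p.length ≤ n} | M.length ≤ n}.Finite :=
    List.finite_length_le _ n
  refine (h2.image (List.map Subtype.val)).subset ?_
  rintro L ⟨⟨hblocks, hnodup⟩, -⟩
  have hflen : L.flatten.length ≤ n := hnodup.length_le_card
  have hblen : ∀ p ∈ L, p.length ≤ n := fun p hp =>
    le_trans (List.Sublist.length_le (List.sublist_flatten_of_mem hp)) hflen
  have hLlen : L.length ≤ n :=
    le_trans (length_le_flatten_length L (fun p hp => (hblocks p hp).1)) hflen
  refine ⟨L.attach.map (fun q => ⟨q.1, hblen q.1 q.2⟩), by show _ ≤ n; simpa using hLlen, ?_⟩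
  simp [List.map_map, Function.comp]

/-- Swap the first two blocks. -/
def swapf : List (List V) → List (List V)
  | a :: b :: t => b :: a :: t
  | L => L

lemma swapf_invol (L : List (List V)) : swapf (swapf L) = L := by
  match L with
  | [] => rfl
  | [a] => rfl
  | a :: b :: t => rfl

lemma swapf_isCover {E : V → V → Prop} {L : List (List V)} (h : IsCover E L) :
    IsCover E (swapf L) := by
  match L with
  | [] => exact h
  | [a] => exact h
  | a :: b :: t =>
    obtain ⟨⟨hblocks, hnodup⟩, hcompl⟩ := h
    have hperm : (swapf (a :: b :: t)).flatten.Perm ((a :: b :: t)).flatten := by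
      show (b ++ (a ++ t.flatten)).Perm (a ++ (b ++ t.flatten))
      simp only [← List.append_assoc]
      exact (List.perm_append_comm).append_right _
    refine ⟨⟨fun p hp => hblocks p ?_, hperm.symm.nodup hnodup⟩, fun x => (hperm.mem_iff).mpr (hcompl x)⟩
    simp only [swapf, List.mem_cons] at hp ⊢
    tauto

lemma swapf_fixed_iff {E : V → V → Prop} {L : List (List V)} (h : IsWCover E L) :
    swapf L = L ↔ L.length ≤ 1 := by
  match L with
  | [] => simp [swapf]
  | [a] => simp [swapf]
  | a :: b :: t =>
    simp only [swapf, List.length_cons]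
    constructor
    · intro heq
      have hab : b = a := by
        have := (List.cons.injEq _ _ _ _).mp heq
        exact this.1
      exfalso
      obtain ⟨x, hxa⟩ := List.exists_mem_of_ne_nil a (h.1 a (by simp)).1
      have hnd := h.2
      simp only [List.flatten_cons] at hnd
      rw [List.nodup_append] at hnd
      exact hnd.2.2 x hxa x (by rw [hab]; exact List.mem_append_left _ hxa) rfl
    · intro hle; omega

open Classical in
/-- Toggle the first "active" position: split the first block if it has length ≥ 2,
else merge the first two blocks if there is an edge between them, else recurse. -/
noncomputable def tog (E : V → V → Prop) : List (List V) → List (List V)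
  | [] => []
  | [] :: rest => [] :: rest
  | (x :: y :: t) :: rest => [x] :: (y :: t) :: rest
  | [x] :: [] => [x] :: []
  | [x] :: [] :: rest => [x] :: [] :: rest
  | [x] :: (y :: q) :: rest =>
    if E x y then (x :: y :: q) :: rest else [x] :: tog E ((y :: q) :: rest)

lemma tog_flatten (E : V → V → Prop) :
    ∀ L : List (List V), (tog E L).flatten = L.flatten
  | [] => by simp [tog]
  | [] :: rest => by simp [tog]
  | (x :: y :: t) :: rest => by simp [tog]
  | [x] :: [] => by simp [tog]
  | [x] :: [] :: rest => by simp [tog]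
  | [x] :: (y :: q) :: rest => by
    rw [tog]
    split
    · simp
    · simp [tog_flatten E ((y :: q) :: rest)]

lemma tog_head (E : V → V → Prop) (y : V) (q : List V) (rest : List (List V)) :
    ∃ q' rest', tog E ((y :: q) :: rest) = (y :: q') :: rest' := by
  match q, rest with
  | z :: t, rest => exact ⟨[], (z :: t) :: rest, by simp [tog]⟩
  | [], [] => exact ⟨[], [], by simp [tog]⟩
  | [], [] :: rest => exact ⟨[], [] :: rest, by simp [tog]⟩
  | [], (z :: w) :: rest =>
    rw [tog]
    split
    · exact ⟨z :: w, rest, rfl⟩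
    · exact ⟨[], tog E ((z :: w) :: rest), rfl⟩

lemma wcover_tail {E : V → V → Prop} {p : List V} {rest : List (List V)}
    (h : IsWCover E (p :: rest)) : IsWCover E rest := by
  refine ⟨fun q hq => h.1 q (by simp [hq]), ?_⟩
  have := h.2
  simp only [List.flatten_cons] at this
  exact (List.nodup_append.mp this).2.1

lemma tog_wcover (E : V → V → Prop) :
    ∀ L : List (List V), IsWCover E L → IsWCover E (tog E L)
  | [] => fun h => h
  | [] :: rest => fun h => h
  | (x :: y :: t) :: rest => fun h => by
    have hnodup : ((tog E ((x :: y :: t) :: rest)).flatten).Nodup := by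
      rw [tog_flatten]; exact h.2
    refine ⟨?_, hnodup⟩
    intro p hp
    simp only [tog, List.mem_cons] at hp
    rcases hp with rfl | rfl | hp
    · exact ⟨by simp, by simp [List.Chain']⟩
    · have := h.1 (x :: y :: t) (by simp)
      exact ⟨by simp, List.IsChain.tail this.2⟩
    · exact h.1 p (by simp [hp])
  | [x] :: [] => fun h => h
  | [x] :: [] :: rest => fun h => h
  | [x] :: (y :: q) :: rest => fun h => by
    have hnodup : ((tog E ([x] :: (y :: q) :: rest)).flatten).Nodup := by
      rw [tog_flatten]; exact h.2
    refine ⟨?_, hnodup⟩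
    intro p hp
    rw [tog] at hp
    split at hp
    · simp only [List.mem_cons] at hp
      rcases hp with rfl | hp
      · refine ⟨by simp, ?_⟩
        rw [List.Chain', List.isChain_cons_cons]
        refine ⟨by assumption, (h.1 (y :: q) (by simp)).2⟩
      · exact h.1 p (by simp [hp])
    · simp only [List.mem_cons] at hp
      rcases hp with rfl | hp
      · exact ⟨by simp, by simp [List.Chain']⟩
      · have hsub : IsWCover E ((y :: q) :: rest) := wcover_tail h
        exact (tog_wcover E ((y :: q) :: rest) hsub).1 p hp

lemma tog_invol (E : V → V → Prop) :
    ∀ L : List (List V), IsWCover E L → tog E (tog E L) = L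
  | [] => fun _ => rfl
  | [] :: rest => fun h => absurd rfl (h.1 [] (by simp)).1
  | (x :: y :: t) :: rest => fun h => by
    have hE : E x y := (List.isChain_cons_cons.mp (h.1 (x :: y :: t) (by simp)).2).1
    simp [tog, hE]
  | [x] :: [] => fun _ => by simp [tog]
  | [x] :: [] :: rest => fun h => absurd rfl (h.1 [] (by simp)).1
  | [x] :: (y :: q) :: rest => fun h => by
    rw [tog]
    split
    · simp [tog]
    · obtain ⟨q', rest', heq⟩ := tog_head E y q rest
      rw [heq, tog]
      split
      · exact absurd (by assumption) (by assumption)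
      · rw [← heq, tog_invol E ((y :: q) :: rest) (wcover_tail h)]

lemma tog_fixed_structure (E : V → V → Prop) :
    ∀ L : List (List V), IsWCover E L → tog E L = L →
      L = L.flatten.map (fun x => [x]) ∧ L.flatten.Chain' (fun a b => ¬ E a b)
  | [] => fun _ _ => by simp [List.Chain']
  | [] :: rest => fun h _ => absurd rfl (h.1 [] (by simp)).1
  | (x :: y :: t) :: rest => fun _ hfix => by
    exfalso
    simp only [tog] at hfix
    have := (List.cons.injEq _ _ _ _).mp hfix
    exact absurd this.1.symm (by simp)
  | [x] :: [] => fun _ _ => by simp [List.Chain']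
  | [x] :: [] :: rest => fun h _ => absurd rfl (h.1 [] (by simp)).1
  | [x] :: (y :: q) :: rest => fun h hfix => by
    rw [tog] at hfix
    split at hfix
    · exfalso
      have := (List.cons.injEq _ _ _ _).mp hfix
      exact absurd this.1 (by simp)
    · have hne : ¬ E x y := by assumption
      have hsub : IsWCover E ((y :: q) :: rest) := wcover_tail h
      have hfix' : tog E ((y :: q) :: rest) = (y :: q) :: rest :=
        (List.cons.injEq _ _ _ _).mp hfix |>.2
      obtain ⟨hstr, hchain⟩ := tog_fixed_structure E ((y :: q) :: rest) hsub hfix'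
      have hflat : ([x] :: (y :: q) :: rest).flatten =
          x :: ((y :: q) :: rest).flatten := by simp
      constructor
      · rw [hflat, List.map_cons, ← hstr]
      · rw [hflat]
        have hhead : ((y :: q) :: rest).flatten = y :: (q ++ rest.flatten) := by simp
        rw [hhead] at hchain ⊢
        exact List.isChain_cons_cons.mpr ⟨hne, hchain⟩

lemma tog_map_singleton (E : V → V → Prop) :
    ∀ l : List V, l.Chain' (fun a b => ¬ E a b) →
      tog E (l.map (fun x => [x])) = l.map (fun x => [x])
  | [] => fun _ => by simp [tog]
  | [x] => fun _ => by simp [tog]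
  | x :: y :: t => fun h => by
    have h1 : ¬ E x y := (List.isChain_cons_cons.mp h).1
    have h2 := tog_map_singleton E (y :: t) (List.isChain_cons_cons.mp h).2
    simp only [List.map_cons] at h2 ⊢
    rw [tog, if_neg h1, h2]

lemma flatten_map_singleton (l : List V) : (l.map (fun x => [x])).flatten = l := by
  induction l with
  | nil => simp
  | cons x t ih => simp [ih]

lemma listing_length [Fintype V] {l : List V} (h1 : l.Nodup) (h2 : ∀ x, x ∈ l) :
    l.length = Fintype.card V := by
  classical
  have ha : l.toFinset = Finset.univ := Finset.eq_univ_iff_forall.mpr (by simpa using h2)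
  have hb := List.toFinset_card_of_nodup h1
  rw [ha, Finset.card_univ] at hb
  omega

lemma xdes_eq_icc_iff (E : V → V → Prop) (l : List V) :
    XDes E l = Set.Icc 1 (l.length - 1) ↔ l.Chain' E := by
  unfold List.Chain'
  rw [List.isChain_iff_getElem]
  constructor
  · intro h i hi
    have hmem : (i + 1) ∈ XDes E l := by
      rw [h]; exact Set.mem_Icc.mpr ⟨by omega, by omega⟩
    obtain ⟨h1, h2, he⟩ := hmem
    simp only [Nat.add_sub_cancel] at he
    exact he
  · intro h
    ext i
    simp only [XDes, Set.mem_setOf_eq, Set.mem_Icc]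
    constructor
    · rintro ⟨h1, h2, -⟩; exact ⟨h1, h2⟩
    · rintro ⟨h1, h2⟩
      refine ⟨h1, h2, ?_⟩
      have he := h (i - 1) (by omega)
      have hi1 : i - 1 + 1 = i := by omega
      simp only [hi1] at he
      exact he

lemma chain'_complEdge_iff (E : V → V → Prop) {l : List V} (h : l.Nodup) :
    l.Chain' (complEdge E) ↔ l.Chain' (fun a b => ¬ E a b) := by
  unfold List.Chain'
  rw [List.isChain_iff_getElem, List.isChain_iff_getElem]
  refine forall_congr' fun i => forall_congr' fun hi => ?_
  unfold complEdge
  have hne : l.get ⟨i, by omega⟩ ≠ l.get ⟨i + 1, by omega⟩ := by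
    intro heq
    have := (List.Nodup.get_inj_iff h).mp heq
    simp only [Fin.mk.injEq] at this
    omega
  tauto

end Aux

/-- Berge's theorem: the number of Hamiltonian paths of a digraph `X` (the `V`-listings
with `X Des(σ) = [n-1]`) and the number of Hamiltonian paths of its complement have
the same parity. -/
theorem berge_parity {V : Type*} [Fintype V]
    (E : V → V → Prop) (hE : ∀ x, ¬ E x x) :
    Nat.card {l : List V // l.Nodup ∧ (∀ x, x ∈ l) ∧
        XDes E l = Set.Icc 1 (Fintype.card V - 1)} ≡
      Nat.card {l : List V // l.Nodup ∧ (∀ x, x ∈ l) ∧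
        XDes (complEdge E) l = Set.Icc 1 (Fintype.card V - 1)} [MOD 2] := by
  classical
  -- replace the XDes conditions with Chain' conditions
  have hA : Nat.card {l : List V // l.Nodup ∧ (∀ x, x ∈ l) ∧
      XDes E l = Set.Icc 1 (Fintype.card V - 1)} =
      Nat.card {l : List V // l.Nodup ∧ (∀ x, x ∈ l) ∧ l.Chain' E} := by
    refine Nat.card_congr (Equiv.subtypeEquivRight fun l => ?_)
    constructor <;> rintro ⟨h1, h2, h3⟩ <;> refine ⟨h1, h2, ?_⟩
    · rw [← listing_length h1 h2] at h3
      exact (xdes_eq_icc_iff E l).mp h3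
    · rw [← listing_length h1 h2]
      exact (xdes_eq_icc_iff E l).mpr h3
  have hB : Nat.card {l : List V // l.Nodup ∧ (∀ x, x ∈ l) ∧
      XDes (complEdge E) l = Set.Icc 1 (Fintype.card V - 1)} =
      Nat.card {l : List V // l.Nodup ∧ (∀ x, x ∈ l) ∧
        l.Chain' (fun a b => ¬ E a b)} := by
    refine Nat.card_congr (Equiv.subtypeEquivRight fun l => ?_)
    constructor <;> rintro ⟨h1, h2, h3⟩ <;> refine ⟨h1, h2, ?_⟩
    · rw [← listing_length h1 h2] at h3
      exact (chain'_complEdge_iff E h1).mp ((xdes_eq_icc_iff (complEdge E) l).mp h3)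
    · rw [← listing_length h1 h2]
      exact (xdes_eq_icc_iff (complEdge E) l).mpr ((chain'_complEdge_iff E h1).mpr h3)
  rw [hA, hB]
  -- the type of covers
  haveI : Finite {L : List (List V) // IsCover E L} := (isCover_finite E).to_subtype
  -- the swap involution
  set F : {L : List (List V) // IsCover E L} → {L : List (List V) // IsCover E L} :=
    fun x => ⟨swapf x.1, swapf_isCover x.2⟩ with hF
  have hFinvol : ∀ x, F (F x) = x := fun x => Subtype.ext (swapf_invol x.1)
  -- the toggle involution
  set G : {L : List (List V) // IsCover E L} → {L : List (List V) // IsCover E L} :=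
    fun x => ⟨tog E x.1, ⟨tog_wcover E x.1 x.2.1,
      fun v => by rw [tog_flatten]; exact x.2.2 v⟩⟩ with hG
  have hGinvol : ∀ x, G (G x) = x := fun x => Subtype.ext (tog_invol E x.1 x.2.1)
  -- fixed points of F are the Hamiltonian paths of E
  have hcardF : Nat.card {x : {L : List (List V) // IsCover E L} // F x = x} =
      Nat.card {l : List V // l.Nodup ∧ (∀ x, x ∈ l) ∧ l.Chain' E} := by
    refine Nat.card_eq_of_bijective
      (fun x => ⟨x.1.1.flatten, x.1.2.1.2, x.1.2.2, ?_⟩) ⟨?_, ?_⟩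
    · -- chain property
      obtain ⟨⟨L, hL⟩, hfix⟩ := x
      have hlen : L.length ≤ 1 := by
        rw [← swapf_fixed_iff hL.1]
        exact congrArg Subtype.val hfix
      match L, hlen with
      | [], _ => simp [List.Chain']
      | [p], _ =>
        simp only [List.flatten_cons, List.flatten_nil, List.append_nil]
        exact (hL.1.1 p (by simp)).2
    · -- injective
      rintro ⟨⟨L, hL⟩, hfixL⟩ ⟨⟨M, hM⟩, hfixM⟩ heq
      simp only [Subtype.mk.injEq] at heq ⊢
      have hlenL : L.length ≤ 1 := by
        rw [← swapf_fixed_iff hL.1]; exact congrArg Subtype.val hfixL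
      have hlenM : M.length ≤ 1 := by
        rw [← swapf_fixed_iff hM.1]; exact congrArg Subtype.val hfixM
      match L, M, hlenL, hlenM with
      | [], [], _, _ => rfl
      | [], [q], _, _ =>
        exfalso
        simp only [List.flatten_cons, List.flatten_nil, List.append_nil] at heq
        exact (hM.1.1 q (by simp)).1 heq.symm
      | [p], [], _, _ =>
        exfalso
        simp only [List.flatten_cons, List.flatten_nil, List.append_nil] at heq
        exact (hL.1.1 p (by simp)).1 heq
      | [p], [q], _, _ =>
        simp only [List.flatten_cons, List.flatten_nil, List.append_nil] at heq
        rw [heq]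
    · -- surjective
      rintro ⟨l, h1, h2, h3⟩
      by_cases hl : l = []
      · refine ⟨⟨⟨[], ⟨⟨by simp, by simp⟩, fun v => ?_⟩⟩, Subtype.ext rfl⟩, ?_⟩
        · have := h2 v; rw [hl] at this; simpa using this
        · apply Subtype.ext
          simp [hl]
      · refine ⟨⟨⟨[l], ⟨⟨?_, ?_⟩, ?_⟩⟩, Subtype.ext rfl⟩, ?_⟩
        · rintro p hp
          simp only [List.mem_cons, List.not_mem_nil, or_false] at hp
          subst hp; exact ⟨hl, h3⟩
        · simpa using h1
        · intro v; simpa using h2 v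
        · apply Subtype.ext
          simp
  -- fixed points of G are the Hamiltonian paths of the complement
  have hcardG : Nat.card {x : {L : List (List V) // IsCover E L} // G x = x} =
      Nat.card {l : List V // l.Nodup ∧ (∀ x, x ∈ l) ∧
        l.Chain' (fun a b => ¬ E a b)} := by
    refine Nat.card_eq_of_bijective
      (fun x => ⟨x.1.1.flatten, x.1.2.1.2, x.1.2.2, ?_⟩) ⟨?_, ?_⟩
    · obtain ⟨⟨L, hL⟩, hfix⟩ := x
      exact (tog_fixed_structure E L hL.1 (congrArg Subtype.val hfix)).2
    · rintro ⟨⟨L, hL⟩, hfixL⟩ ⟨⟨M, hM⟩, hfixM⟩ heq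
      simp only [Subtype.mk.injEq] at heq ⊢
      have hLs := (tog_fixed_structure E L hL.1 (congrArg Subtype.val hfixL)).1
      have hMs := (tog_fixed_structure E M hM.1 (congrArg Subtype.val hfixM)).1
      rw [hLs, hMs, heq]
    · rintro ⟨l, h1, h2, h3⟩
      refine ⟨⟨⟨l.map (fun x => [x]), ⟨⟨?_, ?_⟩, ?_⟩⟩, ?_⟩, ?_⟩
      · rintro p hp
        simp only [List.mem_map] at hp
        obtain ⟨x, -, rfl⟩ := hp
        exact ⟨by simp, by simp [List.Chain']⟩
      · rw [flatten_map_singleton]; exact h1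
      · intro v; rw [flatten_map_singleton]; exact h2 v
      · exact Subtype.ext (tog_map_singleton E l h3)
      · apply Subtype.ext
        simp only
        rw [flatten_map_singleton]
  calc Nat.card {l : List V // l.Nodup ∧ (∀ x, x ∈ l) ∧ l.Chain' E}
      = Nat.card {x : {L : List (List V) // IsCover E L} // F x = x} := hcardF.symm
    _ ≡ Nat.card {L : List (List V) // IsCover E L} [MOD 2] :=
        (parity_invol F hFinvol).symm
    _ ≡ Nat.card {x : {L : List (List V) // IsCover E L} // G x = x} [MOD 2] :=
        parity_invol G hGinvol
    _ = Nat.card {l : List V // l.Nodup ∧ (∀ x, x ∈ l) ∧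
          l.Chain' (fun a b => ¬ E a b)} := hcardG
end

section
/- Let X be a tournament on a vertex set V with |V| = n and let I ⊆ [n−1]. Then the number of V-listings σ with X Des(σ) = I equals the number of V-listings σ with (complement of X) Des(σ) = I^op, where I^op = {n − i : i ∈ I}. (This yields U_X = U_{complement of X} for tournaments.) -/
lemma getElem_idx_congr {V : Type*} (l : List V) {a b : ℕ} (h : a = b)
    (ha : a < l.length) : l[a] = l[b]'(h ▸ ha) := by subst h; rfl

lemma length_eq_card {V : Type*} [Fintype V] {l : List V} (hnd : l.Nodup)
    (hall : ∀ x, x ∈ l) : l.length = Fintype.card V := by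
  classical
  have h : l.toFinset = Finset.univ :=
    Finset.eq_univ_iff_forall.mpr fun x => List.mem_toFinset.mpr (hall x)
  rw [← List.toFinset_card_of_nodup hnd, h, Finset.card_univ]

lemma XDes_reverse {V : Type*} (E : V → V → Prop) (hE : ∀ x, ¬ E x x)
    (htour : ∀ u v : V, u ≠ v → (E u v ↔ ¬ E v u))
    (l : List V) (hnd : l.Nodup) :
    XDes (complEdge E) l.reverse = (fun i => l.length - i) '' XDes E l := by
  ext i
  simp only [XDes, Set.mem_setOf_eq, Set.mem_image, List.length_reverse,
    List.get_eq_getElem]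
  constructor
  · rintro ⟨h1, h2, hedge⟩
    have hlen : 2 ≤ l.length := by omega
    rw [List.getElem_reverse, List.getElem_reverse] at hedge
    have ea : l.length - 1 - (i - 1) = l.length - i := by omega
    have eb : l.length - 1 - i = l.length - i - 1 := by omega
    rw [getElem_idx_congr l ea, getElem_idx_congr l eb] at hedge
    obtain ⟨hne, hnE⟩ := hedge
    exact ⟨l.length - i, ⟨by omega, by omega,
      (htour _ _ hne.symm).mpr hnE⟩, by omega⟩
  · rintro ⟨j, ⟨h1, h2, hedge⟩, rfl⟩
    have hlen : 2 ≤ l.length := by omega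
    refine ⟨by omega, by omega, ?_⟩
    rw [List.getElem_reverse, List.getElem_reverse]
    have e1 : l.length - 1 - (l.length - j - 1) = j := by omega
    have e2 : l.length - 1 - (l.length - j) = j - 1 := by omega
    rw [getElem_idx_congr l e1, getElem_idx_congr l e2]
    have hne : l[j - 1] ≠ l[j] := fun h =>
      absurd (hnd.getElem_inj_iff.mp h) (by omega)
    exact ⟨fun h => absurd (hnd.getElem_inj_iff.mp h) (by omega),
      (htour _ _ hne).mp hedge⟩

/-- For a tournament `X` on `V` with `|V| = n` and `I ⊆ [n-1]`, the number of
`V`-listings `σ` with `X Des(σ) = I` equals the number of `V`-listings `σ` with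
`(complement of X) Des(σ) = I^op`, where `I^op = {n - i : i ∈ I}`. -/
theorem tournament_descents_compl {V : Type*} [Fintype V]
    (E : V → V → Prop) (hE : ∀ x, ¬ E x x)
    (htour : ∀ u v : V, u ≠ v → (E u v ↔ ¬ E v u))
    (I : Set ℕ) (hI : I ⊆ Set.Icc 1 (Fintype.card V - 1)) :
    Nat.card {l : List V // l.Nodup ∧ (∀ x, x ∈ l) ∧ XDes E l = I} =
      Nat.card {l : List V // l.Nodup ∧ (∀ x, x ∈ l) ∧
        XDes (complEdge E) l = (fun i => Fintype.card V - i) '' I} := by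
  set n := Fintype.card V with hn
  have hcE : ∀ x, ¬ complEdge E x x := fun x h => h.1 rfl
  have hctour : ∀ u v : V, u ≠ v → (complEdge E u v ↔ ¬ complEdge E v u) := by
    intro u v huv
    constructor
    · rintro ⟨_, h⟩ hc; exact hc.2 ((htour v u huv.symm).mpr h)
    · intro h; exact ⟨huv, fun hEuv => h ⟨huv.symm, (htour u v huv).mp hEuv⟩⟩
  have hXcc : ∀ l : List V, XDes (complEdge (complEdge E)) l = XDes E l := by
    intro l
    have hcc : ∀ u v : V, complEdge (complEdge E) u v ↔ E u v := by
      intro u v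
      constructor
      · rintro ⟨hne, h⟩
        by_contra hnE
        exact h ⟨hne, hnE⟩
      · intro h
        have hne : u ≠ v := fun heq => hE u (heq ▸ h)
        exact ⟨hne, fun hc => hc.2 h⟩
    ext i
    simp only [XDes, Set.mem_setOf_eq, hcc]
  refine Nat.card_congr ⟨?_, ?_, ?_, ?_⟩
  · rintro ⟨l, hnd, hall, hdes⟩
    refine ⟨l.reverse, List.nodup_reverse.mpr hnd,
      fun x => List.mem_reverse.mpr (hall x), ?_⟩
    rw [XDes_reverse E hE htour l hnd, hdes, length_eq_card hnd hall]
  · rintro ⟨l, hnd, hall, hdes⟩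
    refine ⟨l.reverse, List.nodup_reverse.mpr hnd,
      fun x => List.mem_reverse.mpr (hall x), ?_⟩
    rw [← hXcc l.reverse, XDes_reverse (complEdge E) hcE hctour l hnd, hdes,
      length_eq_card hnd hall]
    ext i
    simp only [Set.mem_image]
    constructor
    · rintro ⟨j, ⟨k, hk, rfl⟩, rfl⟩
      have hk' := hI hk
      simp only [Set.mem_Icc] at hk'
      have he : n - (n - k) = k := by omega
      rwa [he]
    · intro hi
      have hi' := hI hi
      simp only [Set.mem_Icc] at hi'
      exact ⟨n - i, ⟨i, hi, rfl⟩, by omega⟩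
  · rintro ⟨l, hnd, hall, hdes⟩
    exact Subtype.ext (List.reverse_reverse l)
  · rintro ⟨l, hnd, hall, hdes⟩
    exact Subtype.ext (List.reverse_reverse l)
end
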